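/- Any bounded subset of ℝ² with diameter 1 can be partitioned into three subsets, each of diameter strictly less than 1 (Borsuk's theorem in the plane). -/

import Mathlib

open Real

open Real

noncomputable def bF (θ : ℝ) (x : EuclideanSpace ℝ (Fin 2)) : ℝ :=
  x 0 * Real.cos θ + x 1 * Real.sin θ

noncomputable def bM (Φ : Set (EuclideanSpace ℝ (Fin 2))) (θ : ℝ) : ℝ :=
  sInf (bF θ '' Φ)

private lemma borsuk_dist_sq (x y : EuclideanSpace ℝ (Fin 2)) :
    dist x y ^ 2 = (x 0 - y 0)^2 + (x 1 - y 1)^2 := by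
  rw [EuclideanSpace.dist_eq, Real.sq_sqrt (by positivity)]
  simp [Fin.sum_univ_two, Real.dist_eq, sq_abs]

private lemma borsuk_norm_sq (x : EuclideanSpace ℝ (Fin 2)) :
    ‖x‖ ^ 2 = (x 0)^2 + (x 1)^2 := by
  rw [EuclideanSpace.norm_eq, Real.sq_sqrt (by positivity)]
  simp [Fin.sum_univ_two, Real.norm_eq_abs, sq_abs]

private lemma borsuk_coord (x : EuclideanSpace ℝ (Fin 2)) {R : ℝ} (h : ‖x‖ ≤ R) :
    |x 0| ≤ R ∧ |x 1| ≤ R := by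
  have h2 := borsuk_norm_sq x
  have h3 := norm_nonneg x
  constructor
  · nlinarith [abs_nonneg (x 0), sq_abs (x 0), sq_nonneg (x 1)]
  · nlinarith [abs_nonneg (x 1), sq_abs (x 1), sq_nonneg (x 0)]

private lemma borsuk_cos_lip (a b : ℝ) : |Real.cos a - Real.cos b| ≤ |a - b| := by
  rw [Real.cos_sub_cos]
  have h1 : |Real.sin ((a+b)/2)| ≤ 1 := Real.abs_sin_le_one _
  have h2 : |Real.sin ((a-b)/2)| ≤ |a - b| / 2 := by
    have := Real.abs_sin_le_abs (x := (a-b)/2)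
    calc |Real.sin ((a-b)/2)| ≤ |(a-b)/2| := this
      _ = |a-b|/2 := by rw [abs_div]; norm_num
  calc |(-2) * Real.sin ((a+b)/2) * Real.sin ((a-b)/2)|
      = 2 * |Real.sin ((a+b)/2)| * |Real.sin ((a-b)/2)| := by
        rw [abs_mul, abs_mul]; norm_num
    _ ≤ 2 * 1 * (|a-b|/2) := by
        apply mul_le_mul _ h2 (abs_nonneg _) (by norm_num)
        nlinarith [abs_nonneg (Real.sin ((a+b)/2))]
    _ = |a - b| := by ring

private lemma borsuk_sin_lip (a b : ℝ) : |Real.sin a - Real.sin b| ≤ |a - b| := by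
  rw [Real.sin_sub_sin]
  have h1 : |Real.cos ((a+b)/2)| ≤ 1 := Real.abs_cos_le_one _
  have h2 : |Real.sin ((a-b)/2)| ≤ |a - b| / 2 := by
    have := Real.abs_sin_le_abs (x := (a-b)/2)
    calc |Real.sin ((a-b)/2)| ≤ |(a-b)/2| := this
      _ = |a-b|/2 := by rw [abs_div]; norm_num
  calc |2 * Real.sin ((a-b)/2) * Real.cos ((a+b)/2)|
      = 2 * |Real.sin ((a-b)/2)| * |Real.cos ((a+b)/2)| := by
        rw [abs_mul, abs_mul]; norm_num
    _ ≤ 2 * (|a-b|/2) * 1 := by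
        apply mul_le_mul (by apply mul_le_mul le_rfl h2 (abs_nonneg _) (by norm_num)) h1
          (abs_nonneg _) (by positivity)
    _ = |a - b| := by ring

private lemma borsuk_mul_bnd {u w C D : ℝ} (h1 : |u| ≤ C) (h2 : |w| ≤ D) :
    -(C*D) ≤ u * w ∧ u * w ≤ C * D := by
  have habs : |u * w| ≤ C * D := by
    rw [abs_mul]; exact mul_le_mul h1 h2 (abs_nonneg _) ((abs_nonneg u).trans h1)
  exact abs_le.mp habs

private lemma bF_add_pi (θ : ℝ) (x : EuclideanSpace ℝ (Fin 2)) :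
    bF (θ + π) x = -bF θ x := by
  simp only [bF, Real.cos_add_pi, Real.sin_add_pi]; ring

private lemma bM_congr (Φ : Set (EuclideanSpace ℝ (Fin 2))) {θ θ' : ℝ}
    (hc : Real.cos θ = Real.cos θ') (hs : Real.sin θ = Real.sin θ') :
    bM Φ θ = bM Φ θ' := by
  simp only [bM, bF, hc, hs]
  rw [show bF θ = bF θ' from funext fun x => by simp only [bF, hc, hs]]

private lemma borsuk_c23 : Real.cos (2*π/3) = -(1/2) := by
  rw [show (2*π/3 : ℝ) = π - π/3 by ring, Real.cos_pi_sub, Real.cos_pi_div_three]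

private lemma borsuk_s23 : Real.sin (2*π/3) = Real.sqrt 3 / 2 := by
  rw [show (2*π/3 : ℝ) = π - π/3 by ring, Real.sin_pi_sub, Real.sin_pi_div_three]

private lemma borsuk_c43 : Real.cos (4*π/3) = -(1/2) := by
  rw [show (4*π/3 : ℝ) = π/3 + π by ring, Real.cos_add_pi, Real.cos_pi_div_three]

private lemma borsuk_s43 : Real.sin (4*π/3) = -(Real.sqrt 3 / 2) := by
  rw [show (4*π/3 : ℝ) = π/3 + π by ring, Real.sin_add_pi, Real.sin_pi_div_three]

-- the key metric identity
private lemma borsuk_iden (θ : ℝ) (x y : EuclideanSpace ℝ (Fin 2)) :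
    (bF θ x - bF θ y)^2 + (bF (θ + 2*π/3) x - bF (θ + 2*π/3) y)^2
      + (bF (θ + 4*π/3) x - bF (θ + 4*π/3) y)^2 = 3/2 * dist x y ^ 2 := by
  have hc1 : Real.cos (θ + 2*π/3) = -(1/2) * Real.cos θ - (Real.sqrt 3/2) * Real.sin θ := by
    rw [Real.cos_add, borsuk_c23, borsuk_s23]; ring
  have hs1 : Real.sin (θ + 2*π/3) = -(1/2) * Real.sin θ + (Real.sqrt 3/2) * Real.cos θ := by
    rw [Real.sin_add, borsuk_c23, borsuk_s23]; ring
  have hc2 : Real.cos (θ + 4*π/3) = -(1/2) * Real.cos θ + (Real.sqrt 3/2) * Real.sin θ := by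
    rw [Real.cos_add, borsuk_c43, borsuk_s43]; ring
  have hs2 : Real.sin (θ + 4*π/3) = -(1/2) * Real.sin θ - (Real.sqrt 3/2) * Real.cos θ := by
    rw [Real.sin_add, borsuk_c43, borsuk_s43]; ring
  have hpy : Real.sin θ ^ 2 + Real.cos θ ^ 2 = 1 := Real.sin_sq_add_cos_sq θ
  have h3 : Real.sqrt 3 ^ 2 = 3 := Real.sq_sqrt (by norm_num)
  rw [borsuk_dist_sq]
  simp only [bF, hc1, hs1, hc2, hs2]
  nlinarith [hpy, h3, sq_nonneg (Real.sqrt 3), sq_nonneg ((x 1 - y 1) * Real.cos θ - (x 0 - y 0) * Real.sin θ)]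

-- sum of the three projections vanishes
private lemma borsuk_tsum (θ : ℝ) (x : EuclideanSpace ℝ (Fin 2)) :
    bF θ x + bF (θ + 2*π/3) x + bF (θ + 4*π/3) x = 0 := by
  have hc1 : Real.cos (θ + 2*π/3) = -(1/2) * Real.cos θ - (Real.sqrt 3/2) * Real.sin θ := by
    rw [Real.cos_add, borsuk_c23, borsuk_s23]; ring
  have hs1 : Real.sin (θ + 2*π/3) = -(1/2) * Real.sin θ + (Real.sqrt 3/2) * Real.cos θ := by
    rw [Real.sin_add, borsuk_c23, borsuk_s23]; ring
  have hc2 : Real.cos (θ + 4*π/3) = -(1/2) * Real.cos θ + (Real.sqrt 3/2) * Real.sin θ := by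
    rw [Real.cos_add, borsuk_c43, borsuk_s43]; ring
  have hs2 : Real.sin (θ + 4*π/3) = -(1/2) * Real.sin θ - (Real.sqrt 3/2) * Real.cos θ := by
    rw [Real.sin_add, borsuk_c43, borsuk_s43]; ring
  simp only [bF, hc1, hs1, hc2, hs2]; ring

private lemma borsuk_quad (A B : ℝ) (h1 : A ≤ 3/4) (h2 : -(3/4) ≤ A)
    (h3 : B ≤ 3/4) (h4 : -(3/4) ≤ B) (h5 : A + B ≤ 1/2) (h6 : -(1/2) ≤ A + B) :
    (A + B)^2 + A^2 + B^2 ≤ 9/8 := by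
  rcases le_total 0 A with hA0 | hA0 <;> rcases le_total 0 B with hB0 | hB0
  · nlinarith [mul_nonneg hA0 hB0,
      mul_nonneg (by linarith : (0:ℝ) ≤ A + B) (by linarith : (0:ℝ) ≤ 1/2 - (A+B))]
  · nlinarith [mul_nonneg hA0 (by linarith : (0:ℝ) ≤ 3/4 - A),
      mul_nonneg (by linarith : (0:ℝ) ≤ 3/4 + B) (by linarith : (0:ℝ) ≤ -B),
      mul_nonneg (by linarith : (0:ℝ) ≤ 3/4 + B) (by linarith : (0:ℝ) ≤ 3/4 - A)]
  · nlinarith [mul_nonneg hB0 (by linarith : (0:ℝ) ≤ 3/4 - B),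
      mul_nonneg (by linarith : (0:ℝ) ≤ 3/4 + A) (by linarith : (0:ℝ) ≤ -A),
      mul_nonneg (by linarith : (0:ℝ) ≤ 3/4 + A) (by linarith : (0:ℝ) ≤ 3/4 - B)]
  · nlinarith [mul_nonneg (by linarith : (0:ℝ) ≤ -A) (by linarith : (0:ℝ) ≤ -B),
      mul_nonneg (by linarith : (0:ℝ) ≤ -(A + B)) (by linarith : (0:ℝ) ≤ 1/2 + (A+B))]

private lemma borsuk_pent (p0 p1 p2 q0 q1 q2 : ℝ)
    (hps : p0 + p1 + p2 = 0) (hqs : q0 + q1 + q2 = 0)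
    (hp1 : p0 ≤ p1) (hp2 : p0 ≤ p2) (hq1 : q0 ≤ q1) (hq2 : q0 ≤ q2)
    (hpl : -(1/2) ≤ p0) (hpu1 : p1 ≤ 1/2) (hpu2 : p2 ≤ 1/2)
    (hql : -(1/2) ≤ q0) (hqu1 : q1 ≤ 1/2) (hqu2 : q2 ≤ 1/2) :
    (p0 - q0)^2 + (p1 - q1)^2 + (p2 - q2)^2 ≤ 9/8 := by
  have key := borsuk_quad (p1 - q1) (p2 - q2)
    (by linarith) (by linarith) (by linarith) (by linarith)
    (by linarith) (by linarith)
  have h0 : p0 - q0 = -((p1 - q1) + (p2 - q2)) := by linarith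
  rw [h0]
  nlinarith [key]

private lemma borsuk_proj_le (θ : ℝ) (x y : EuclideanSpace ℝ (Fin 2)) :
    bF θ x - bF θ y ≤ dist x y := by
  have hd2 := borsuk_dist_sq x y
  have hpy := Real.sin_sq_add_cos_sq θ
  have hdn : (0:ℝ) ≤ dist x y := dist_nonneg
  simp only [bF]
  nlinarith [sq_nonneg ((x 0 - y 0) * Real.sin θ - (x 1 - y 1) * Real.cos θ),
    sq_nonneg (dist x y - ((x 0 - y 0) * Real.cos θ + (x 1 - y 1) * Real.sin θ))]

open EuclideanGeometry Affine Metric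

theorem stmt6 (Φ : Set (EuclideanSpace ℝ (Fin 2))) (hbdd : Bornology.IsBounded Φ)
    (hdiam : Metric.diam Φ = 1) :
    ∃ S₁ S₂ S₃ : Set (EuclideanSpace ℝ (Fin 2)),
      Φ = S₁ ∪ S₂ ∪ S₃ ∧
      Metric.diam S₁ < 1 ∧ Metric.diam S₂ < 1 ∧ Metric.diam S₃ < 1 := by
  have hne : Φ.Nonempty := by
    rcases Set.eq_empty_or_nonempty Φ with h | h
    · exfalso; rw [h, Metric.diam_empty] at hdiam; norm_num at hdiam
    · exact h
  obtain ⟨R, hR⟩ := hbdd.exists_norm_le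
  obtain ⟨x₀, hx₀⟩ := hne
  have hne : Φ.Nonempty := ⟨x₀, hx₀⟩
  have hR0 : 0 ≤ R := (norm_nonneg x₀).trans (hR x₀ hx₀)
  have hbdd_below : ∀ θ : ℝ, BddBelow (bF θ '' Φ) := by
    intro θ
    refine ⟨-(2*R), ?_⟩
    rintro _ ⟨x, hx, rfl⟩
    obtain ⟨h0, h1⟩ := borsuk_coord x (hR x hx)
    have a0 := (borsuk_mul_bnd h0 (Real.abs_cos_le_one θ)).1
    have a1 := (borsuk_mul_bnd h1 (Real.abs_sin_le_one θ)).1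
    simp only [bF]
    linarith [a0, a1]
  have him : ∀ θ : ℝ, (bF θ '' Φ).Nonempty := fun θ => hne.image _
  have hm_le : ∀ θ : ℝ, ∀ x ∈ Φ, bM Φ θ ≤ bF θ x := fun θ x hx =>
    csInf_le (hbdd_below θ) ⟨x, hx, rfl⟩
  have hle_m : ∀ (θ : ℝ) (c : ℝ), (∀ x ∈ Φ, c ≤ bF θ x) → c ≤ bM Φ θ := fun θ c hc =>
    le_csInf (him θ) (by rintro _ ⟨x, hx, rfl⟩; exact hc x hx)
  have hf1 : ∀ (θ : ℝ), ∀ x ∈ Φ, ∀ y ∈ Φ, bF θ x - bF θ y ≤ 1 := by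
    intro θ x hx y hy
    have hd : dist x y ≤ 1 := by
      rw [← hdiam]; exact Metric.dist_le_diam_of_mem hbdd hx hy
    linarith [borsuk_proj_le θ x y]
  have hwid : ∀ θ : ℝ, -1 ≤ bM Φ θ + bM Φ (θ + π) := by
    intro θ
    have h2 : -1 - bM Φ θ ≤ bM Φ (θ + π) := by
      apply hle_m
      intro x hx
      rw [bF_add_pi]
      have h1 : bF θ x - 1 ≤ bM Φ θ := by
        apply hle_m
        intro y hy
        linarith [hf1 θ x hx y hy]
      linarith
    linarith
  have hmlip : ∀ a b : ℝ, bM Φ a ≤ bM Φ b + 2*R*|a - b| := by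
    intro a b
    have key : ∀ x ∈ Φ, bM Φ a - 2*R*|a-b| ≤ bF b x := by
      intro x hx
      obtain ⟨h0, h1⟩ := borsuk_coord x (hR x hx)
      have c1 := (borsuk_mul_bnd h0 (borsuk_cos_lip a b)).2
      have c2 := (borsuk_mul_bnd h1 (borsuk_sin_lip a b)).2
      have hfa := hm_le a x hx
      simp only [bF] at hfa ⊢
      nlinarith [c1, c2, hfa]
    linarith [hle_m b (bM Φ a - 2*R*|a-b|) key]
  have hmcont : Continuous (bM Φ) := by
    have hlip : LipschitzWith (Real.toNNReal (2*R)) (bM Φ) := by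
      apply LipschitzWith.of_dist_le_mul
      intro a b
      rw [Real.dist_eq, Real.dist_eq, Real.coe_toNNReal _ (by positivity)]
      rw [abs_sub_le_iff]
      constructor
      · linarith [hmlip a b]
      · have h := hmlip b a
        rw [abs_sub_comm b a] at h
        linarith
    exact hlip.continuous
  set g : ℝ → ℝ := fun θ => bM Φ θ + bM Φ (θ + 2*π/3) + bM Φ (θ + 4*π/3) with hgdef
  have hgcont : Continuous g := by
    rw [hgdef]
    exact (hmcont.add (hmcont.comp (continuous_id.add continuous_const))).add
      (hmcont.comp (continuous_id.add continuous_const))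
  have hgper : ∀ θ : ℝ, g (θ + 2*π/3) = g θ := by
    intro θ
    simp only [hgdef]
    rw [show θ + 2*π/3 + 2*π/3 = θ + 4*π/3 by ring,
        show θ + 2*π/3 + 4*π/3 = θ + 2*π by ring,
        bM_congr Φ (Real.cos_add_two_pi θ) (Real.sin_add_two_pi θ)]
    ring
  set hh : ℝ → ℝ := fun θ => g θ - g (θ + π/3) with hhdef
  have hhcont : Continuous hh := by
    rw [hhdef]
    exact hgcont.sub (hgcont.comp (continuous_id.add continuous_const))
  have hflip : hh (π/3) = -(hh 0) := by
    simp only [hhdef]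
    rw [show (π/3 + π/3 : ℝ) = 0 + 2*π/3 by ring, hgper 0, zero_add]
    ring
  obtain ⟨θs, hθsmem, hθs⟩ : ∃ t ∈ Set.Icc (0:ℝ) (π/3), hh t = 0 := by
    have hle : (0:ℝ) ≤ π/3 := by positivity
    rcases le_total (hh 0) 0 with hc | hc
    · have h0 : (0:ℝ) ∈ Set.Icc (hh 0) (hh (π/3)) := ⟨hc, by rw [hflip]; linarith⟩
      obtain ⟨t, ht, ht0⟩ := intermediate_value_Icc hle hhcont.continuousOn h0
      exact ⟨t, ht, ht0⟩
    · have h0 : (0:ℝ) ∈ Set.Icc (hh (π/3)) (hh 0) := ⟨by rw [hflip]; linarith, hc⟩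
      obtain ⟨t, ht, ht0⟩ := intermediate_value_Icc' hle hhcont.continuousOn h0
      exact ⟨t, ht, ht0⟩
  have hbal0 : g θs = g (θs + π/3) := by
    simp only [hhdef] at hθs; linarith
  have hbal : bM Φ θs + bM Φ (θs + 2*π/3) + bM Φ (θs + 4*π/3)
      = bM Φ (θs + π) + bM Φ (θs + 2*π/3 + π) + bM Φ (θs + 4*π/3 + π) := by
    have e3 : bM Φ (θs + 4*π/3 + π) = bM Φ (θs + π/3) := by
      rw [show θs + 4*π/3 + π = (θs + π/3) + 2*π by ring]
      exact bM_congr Φ (Real.cos_add_two_pi _) (Real.sin_add_two_pi _)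
    have hb := hbal0
    simp only [hgdef] at hb
    rw [show θs + π/3 + 2*π/3 = θs + π by ring,
        show θs + π/3 + 4*π/3 = θs + 2*π/3 + π by ring] at hb
    rw [e3]
    linarith
  obtain ⟨c0, hc0⟩ : ∃ c : ℝ, c = (bM Φ θs - bM Φ (θs + π))/2 := ⟨_, rfl⟩
  obtain ⟨c1, hc1⟩ : ∃ c : ℝ, c = (bM Φ (θs + 2*π/3) - bM Φ (θs + 2*π/3 + π))/2 := ⟨_, rfl⟩
  obtain ⟨c2, hc2⟩ : ∃ c : ℝ, c = (bM Φ (θs + 4*π/3) - bM Φ (θs + 4*π/3 + π))/2 := ⟨_, rfl⟩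
  have hcsum : c0 + c1 + c2 = 0 := by rw [hc0, hc1, hc2]; linarith [hbal]
  have hbox : ∀ θ : ℝ, ∀ c : ℝ, c = (bM Φ θ - bM Φ (θ + π))/2 → ∀ x ∈ Φ,
      -(1/2) ≤ bF θ x - c ∧ bF θ x - c ≤ 1/2 := by
    intro θ c hc x hx
    have h1 := hm_le θ x hx
    have h2 := hm_le (θ + π) x hx
    rw [bF_add_pi] at h2
    have h3 := hwid θ
    constructor <;> (rw [hc]; linarith)
  have hbox0 := hbox θs c0 hc0
  have hbox1 := hbox (θs + 2*π/3) c1 hc1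
  have hbox2 := hbox (θs + 4*π/3) c2 hc2
  have hsum0 : ∀ x ∈ Φ, (bF θs x - c0) + (bF (θs + 2*π/3) x - c1)
      + (bF (θs + 4*π/3) x - c2) = 0 := by
    intro x hx
    have := borsuk_tsum θs x
    linarith [hcsum]
  have hdist : ∀ x ∈ Φ, ∀ y ∈ Φ,
      ((bF θs x - c0) - (bF θs y - c0))^2
      + ((bF (θs + 2*π/3) x - c1) - (bF (θs + 2*π/3) y - c1))^2
      + ((bF (θs + 4*π/3) x - c2) - (bF (θs + 4*π/3) y - c2))^2 ≤ 9/8 →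
      dist x y ≤ 7/8 := by
    intro x hx y hy hsum
    have hi := borsuk_iden θs x y
    have hdn : (0:ℝ) ≤ dist x y := dist_nonneg
    nlinarith [hi, hsum, sq_nonneg (dist x y - 7/8)]
  refine ⟨{x ∈ Φ | bF θs x - c0 ≤ bF (θs + 2*π/3) x - c1
              ∧ bF θs x - c0 ≤ bF (θs + 4*π/3) x - c2},
          {x ∈ Φ | bF (θs + 2*π/3) x - c1 ≤ bF θs x - c0
              ∧ bF (θs + 2*π/3) x - c1 ≤ bF (θs + 4*π/3) x - c2},
          {x ∈ Φ | bF (θs + 4*π/3) x - c2 ≤ bF θs x - c0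
              ∧ bF (θs + 4*π/3) x - c2 ≤ bF (θs + 2*π/3) x - c1},
          ?_, ?_, ?_, ?_⟩
  · ext x
    simp only [Set.mem_union, Set.mem_setOf_eq]
    constructor
    · intro hx
      rcases le_total (bF θs x - c0) (bF (θs + 2*π/3) x - c1) with h01 | h01
      · rcases le_total (bF θs x - c0) (bF (θs + 4*π/3) x - c2) with h02 | h02
        · exact Or.inl (Or.inl ⟨hx, h01, h02⟩)
        · exact Or.inr ⟨hx, h02, le_trans h02 h01⟩
      · rcases le_total (bF (θs + 2*π/3) x - c1) (bF (θs + 4*π/3) x - c2) with h12 | h12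
        · exact Or.inl (Or.inr ⟨hx, h01, h12⟩)
        · exact Or.inr ⟨hx, le_trans h12 h01, h12⟩
    · rintro ((h | h) | h) <;> exact h.1
  · refine lt_of_le_of_lt (Metric.diam_le_of_forall_dist_le (by norm_num) ?_)
      (by norm_num : (7:ℝ)/8 < 1)
    rintro x ⟨hxΦ, hx1, hx2⟩ y ⟨hyΦ, hy1, hy2⟩
    apply hdist x hxΦ y hyΦ
    have hp := borsuk_pent (bF θs x - c0) (bF (θs + 2*π/3) x - c1) (bF (θs + 4*π/3) x - c2)
      (bF θs y - c0) (bF (θs + 2*π/3) y - c1) (bF (θs + 4*π/3) y - c2)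
      (hsum0 x hxΦ) (hsum0 y hyΦ) hx1 hx2 hy1 hy2
      (hbox0 x hxΦ).1 (hbox1 x hxΦ).2 (hbox2 x hxΦ).2
      (hbox0 y hyΦ).1 (hbox1 y hyΦ).2 (hbox2 y hyΦ).2
    linarith [hp]
  · refine lt_of_le_of_lt (Metric.diam_le_of_forall_dist_le (by norm_num) ?_)
      (by norm_num : (7:ℝ)/8 < 1)
    rintro x ⟨hxΦ, hx1, hx2⟩ y ⟨hyΦ, hy1, hy2⟩
    apply hdist x hxΦ y hyΦ
    have hp := borsuk_pent (bF (θs + 2*π/3) x - c1) (bF θs x - c0) (bF (θs + 4*π/3) x - c2)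
      (bF (θs + 2*π/3) y - c1) (bF θs y - c0) (bF (θs + 4*π/3) y - c2)
      (by linarith [hsum0 x hxΦ]) (by linarith [hsum0 y hyΦ]) hx1 hx2 hy1 hy2
      (hbox1 x hxΦ).1 (hbox0 x hxΦ).2 (hbox2 x hxΦ).2
      (hbox1 y hyΦ).1 (hbox0 y hyΦ).2 (hbox2 y hyΦ).2
    linarith [hp]
  · refine lt_of_le_of_lt (Metric.diam_le_of_forall_dist_le (by norm_num) ?_)
      (by norm_num : (7:ℝ)/8 < 1)
    rintro x ⟨hxΦ, hx1, hx2⟩ y ⟨hyΦ, hy1, hy2⟩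
    apply hdist x hxΦ y hyΦ
    have hp := borsuk_pent (bF (θs + 4*π/3) x - c2) (bF θs x - c0) (bF (θs + 2*π/3) x - c1)
      (bF (θs + 4*π/3) y - c2) (bF θs y - c0) (bF (θs + 2*π/3) y - c1)
      (by linarith [hsum0 x hxΦ]) (by linarith [hsum0 y hyΦ]) hx1 hx2 hy1 hy2
      (hbox2 x hxΦ).1 (hbox0 x hxΦ).2 (hbox1 x hxΦ).2
      (hbox2 y hyΦ).1 (hbox0 y hyΦ).2 (hbox1 y hyΦ).2
    linarith [hp]
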